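/- For all positive integers N, k, ℓ, there exists a finite family H of functions from {1, …, N} to {0, 1}^ℓ with |H| ≤ 2^{k·(ℓ + ⌈log₂ N⌉)} such that, when h is drawn uniformly at random from H, the random variables (h(x))_{x ∈ {1,…,N}} are k-wise independent and each h(x) is uniformly distributed on {0, 1}^ℓ. -/

import Mathlib

open MeasureTheory ProbabilityTheory
open Finset
open scoped ENNReal

lemma kwise_fiber_card_eq {G G' : Type*} [AddGroup G] [AddGroup G'] [Fintype G]
    [DecidableEq G'] (ψ : G →+ G') (a₀ : G) :
    (univ.filter fun a => ψ a = ψ a₀).card = (univ.filter fun a => ψ a = 0).card := by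
  refine Finset.card_nbij' (fun a => a - a₀) (fun a => a + a₀) ?_ ?_ ?_ ?_
  · intro a ha
    simp only [mem_coe, mem_filter, mem_univ, true_and] at ha ⊢
    simp [map_sub, ha]
  · intro a ha
    simp only [mem_coe, mem_filter, mem_univ, true_and] at ha ⊢
    simp [map_add, ha]
  · intro a _; simp
  · intro a _; simp

lemma kwise_count_mem {G G' : Type*} [AddGroup G] [AddGroup G'] [Fintype G] [Fintype G']
    [DecidableEq G'] (ψ : G →+ G') (hψ : Function.Surjective ψ) (W : Finset G') :
    (univ.filter fun a => ψ a ∈ W).card * Fintype.card G' = W.card * Fintype.card G := by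
  set c0 := (univ.filter fun a : G => ψ a = 0).card with hc0
  have key : ∀ V : Finset G', (univ.filter fun a => ψ a ∈ V).card = V.card * c0 := by
    intro V
    rw [Finset.card_eq_sum_card_fiberwise (f := ψ) (s := univ.filter fun a => ψ a ∈ V) (t := V)
      (fun a ha => (mem_filter.mp (Finset.mem_coe.mp ha)).2)]
    rw [Finset.sum_congr rfl (fun b hb => ?_), Finset.sum_const, smul_eq_mul]
    obtain ⟨a₀, rfl⟩ := hψ b
    rw [hc0, ← kwise_fiber_card_eq ψ a₀]
    congr 1
    ext a
    simp only [mem_filter, mem_univ, true_and, and_iff_right_iff_imp]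
    intro h
    rw [h]; exact hb
  have total : Fintype.card G = Fintype.card G' * c0 := by
    have h := key univ
    simpa using h
  rw [key W, total]; ring

lemma kwise_eval_surj {F : Type*} [Field F] {ι : Type*} [Fintype ι] [DecidableEq ι]
    {k : ℕ} (hk : 0 < k) (v : ι → F) (hv : Function.Injective v)
    (hcard : Fintype.card ι ≤ k) (c : ι → F) :
    ∃ a : Fin k → F, ∀ j, ∑ i : Fin k, a i * v j ^ (i : ℕ) = c j := by
  classical
  set p := Lagrange.interpolate Finset.univ v c with hp
  have hdeg : p.natDegree < k := by
    by_cases h0 : p = 0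
    · simpa [h0] using hk
    · rw [Polynomial.natDegree_lt_iff_degree_lt h0]
      refine lt_of_lt_of_le (Lagrange.degree_interpolate_lt c hv.injOn) ?_
      rw [Finset.card_univ]
      exact_mod_cast hcard
  refine ⟨fun i => p.coeff i, fun j => ?_⟩
  have h1 : p.eval (v j) = c j := Lagrange.eval_interpolate_at_node c hv.injOn (mem_univ j)
  rw [← h1, Polynomial.eval_eq_sum_range' hdeg,
    Fin.sum_univ_eq_sum_range (fun i => p.coeff i * v j ^ i)]

lemma kwise_nat_div_eq {a b c d : ℕ} (hb : 0 < b) (hd : 0 < d) (h : a * d = c * b) :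
    (a : ℝ≥0∞) / b = (c : ℝ≥0∞) / d := by
  rw [ENNReal.div_eq_div_iff (by exact_mod_cast hd.ne' : (d : ℝ≥0∞) ≠ 0) (by simp)
      (by exact_mod_cast hb.ne' : (b : ℝ≥0∞) ≠ 0) (by simp)]
  have : d * a = b * c := by rw [mul_comm d a, mul_comm b c]; exact h
  exact_mod_cast this

/-- The evaluation of the polynomial with coefficients `a` at `z`. -/
noncomputable def kwEv {F : Type*} [Field F] {k : ℕ} (a : Fin k → F) (z : F) : F :=
  ∑ i : Fin k, a i * z ^ (i : ℕ)

/-- A surjective `ZMod 2`-linear projection from `GaloisField 2 (ℓ + c)` to `Fin ℓ → ZMod 2`. -/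
noncomputable def kwPhi (ℓ c : ℕ) (hℓ : 0 < ℓ) (u : GaloisField 2 (ℓ + c)) :
    Fin ℓ → ZMod 2 :=
  fun j => (Module.finBasisOfFinrankEq (ZMod 2) (GaloisField 2 (ℓ + c))
    (GaloisField.finrank 2 (by omega))).equivFun u (Fin.castAdd c j)

lemma kwPhi_add (ℓ c : ℕ) (hℓ : 0 < ℓ) (u v : GaloisField 2 (ℓ + c)) :
    kwPhi ℓ c hℓ (u + v) = kwPhi ℓ c hℓ u + kwPhi ℓ c hℓ v := by
  funext j
  simp [kwPhi, map_add]

lemma kwPhi_surj (ℓ c : ℕ) (hℓ : 0 < ℓ) : Function.Surjective (kwPhi ℓ c hℓ) := by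
  intro y
  set B := Module.finBasisOfFinrankEq (ZMod 2) (GaloisField 2 (ℓ + c))
      (GaloisField.finrank 2 (by omega)) with hB
  refine ⟨B.equivFun.symm (fun i => if h : (i : ℕ) < ℓ then y ⟨i, h⟩ else 0), ?_⟩
  funext j
  show B.equivFun (B.equivFun.symm fun i => if h : (i : ℕ) < ℓ then y ⟨i, h⟩ else 0)
      (Fin.castAdd c j) = y j
  rw [LinearEquiv.apply_symm_apply]
  simp [Fin.coe_castAdd, j.isLt]

/-- The hash-family hom: coefficients `a` are mapped to the tuple of projected evaluations. -/
noncomputable def kwTheta {ι : Type*} (k ℓ c : ℕ) (hℓ : 0 < ℓ)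
    (w : ι → GaloisField 2 (ℓ + c)) :
    (Fin k → GaloisField 2 (ℓ + c)) →+ (ι → Fin ℓ → ZMod 2) :=
  AddMonoidHom.mk' (fun a j => kwPhi ℓ c hℓ (kwEv a (w j))) (by
    intro a b
    funext j
    have : kwEv (a + b) (w j) = kwEv a (w j) + kwEv b (w j) := by
      simp [kwEv, add_mul, Finset.sum_add_distrib]
    simp [this, kwPhi_add])

lemma kwTheta_surj {ι : Type*} [Fintype ι] [DecidableEq ι] (k ℓ c : ℕ)
    (hk : 0 < k) (hℓ : 0 < ℓ) (w : ι → GaloisField 2 (ℓ + c))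
    (hw : Function.Injective w) (hcard : Fintype.card ι ≤ k) :
    Function.Surjective (kwTheta k ℓ c hℓ w) := by
  intro y
  choose cf hcf using fun j => kwPhi_surj ℓ c hℓ (y j)
  obtain ⟨a, ha⟩ := kwise_eval_surj hk w hw hcard cf
  refine ⟨a, funext fun j => ?_⟩
  show kwPhi ℓ c hℓ (kwEv a (w j)) = y j
  rw [show kwEv a (w j) = cf j from ha j, hcf j]

/-- An explicit equivalence between `ZMod 2` and `Bool`. -/
def kwE : ZMod 2 ≃ Bool where
  toFun z := z = 1
  invFun b := if b then 1 else 0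
  left_inv := by decide
  right_inv := by decide

/-- A finite family of random variables is `k`-wise independent if every subfamily of at most
`k` of them is mutually independent. -/
def KWiseIndepFun {Ω ι β : Type*} [MeasurableSpace Ω] [MeasurableSpace β]
    (k : ℕ) (X : ι → Ω → β) (P : Measure Ω) : Prop :=
  ∀ S : Finset ι, S.card ≤ k →
    iIndepFun (fun i : S => X i) P

/-- For all positive integers `N, k, ℓ`, there exists a finite family `H` of functions from
`{1, …, N}` (modeled as `Fin N`) to `{0, 1}^ℓ` (modeled as `Fin ℓ → Bool`) with
`|H| ≤ 2^(k·(ℓ + ⌈log₂ N⌉))` such that, when `h` is drawn uniformly at random from `H`, the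
random variables `(h(x))_{x ∈ Fin N}` are `k`-wise independent and each `h(x)` is uniformly
distributed on `{0, 1}^ℓ`. -/
theorem exists_kwise_independent_hash_family (N k ℓ : ℕ) (hN : 0 < N) (hk : 0 < k)
    (hℓ : 0 < ℓ) :
    ∃ (H : Finset (Fin N → (Fin ℓ → Bool))) (hne : H.Nonempty),
      H.card ≤ 2 ^ (k * (ℓ + Nat.clog 2 N)) ∧
      KWiseIndepFun k (fun (x : Fin N) (h : Fin N → (Fin ℓ → Bool)) => h x)
        (PMF.uniformOfFinset H hne).toMeasure ∧
      ∀ (x : Fin N) (y : Fin ℓ → Bool),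
        (PMF.uniformOfFinset H hne).toMeasure {h | h x = y} = 1 / 2 ^ ℓ := by
  classical
  have hm0 : ℓ + Nat.clog 2 N ≠ 0 := by omega
  set F := GaloisField 2 (ℓ + Nat.clog 2 N) with hF
  letI : Fintype F := Fintype.ofFinite F
  haveI : Nonempty F := ⟨0⟩
  have hcardF : Fintype.card F = 2 ^ (ℓ + Nat.clog 2 N) := by
    rw [← Nat.card_eq_fintype_card]; exact GaloisField.card 2 _ hm0
  have hNle : N ≤ Fintype.card F := by
    rw [hcardF]
    calc N ≤ 2 ^ Nat.clog 2 N := Nat.le_pow_clog (by norm_num) N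
      _ ≤ 2 ^ (ℓ + Nat.clog 2 N) := Nat.pow_le_pow_right (by norm_num) (Nat.le_add_left _ _)
  obtain ⟨ιF⟩ : Nonempty (Fin N ↪ F) :=
    Function.Embedding.nonempty_of_card_le (by simpa using hNle)
  set A := (Fin k → F) with hA
  have hcardA : Fintype.card A = 2 ^ (k * (ℓ + Nat.clog 2 N)) := by
    rw [show Fintype.card A = Fintype.card F ^ k by rw [Fintype.card_fun, Fintype.card_fin], hcardF, ← pow_mul, mul_comm]
  have hAcard_pos : 0 < Fintype.card A := Fintype.card_pos
  have hcardGl : Fintype.card (Fin ℓ → ZMod 2) = 2 ^ ℓ := by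
    rw [Fintype.card_fun, ZMod.card, Fintype.card_fin]
  set E₂ : (Fin ℓ → ZMod 2) ≃ (Fin ℓ → Bool) := Equiv.piCongrRight (fun _ => kwE) with hE₂
  set ΨH : A →+ (Fin N → Fin ℓ → ZMod 2) :=
    kwTheta k ℓ (Nat.clog 2 N) hℓ (fun x => ιF x) with hΨH
  set Ψ : A → (Fin N → Fin ℓ → Bool) := fun a x => E₂ (ΨH a x) with hΨ
  set H : Finset (Fin N → (Fin ℓ → Bool)) := Finset.image Ψ univ with hH
  have hne : H.Nonempty := ⟨Ψ 0, mem_image_of_mem _ (mem_univ 0)⟩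
  set c0 := (univ.filter fun a : A => ΨH a = 0).card with hc0
  have hΨinj : ∀ a a₀ : A, Ψ a = Ψ a₀ ↔ ΨH a = ΨH a₀ := by
    intro a a₀
    constructor
    · intro h
      funext x
      exact E₂.injective (congrFun h x)
    · intro h
      simp only [hΨ, h]
  have hfiber : ∀ a₀ : A, (univ.filter fun a : A => Ψ a = Ψ a₀).card = c0 := by
    intro a₀
    rw [hc0, ← kwise_fiber_card_eq ΨH a₀]
    congr 1
    ext a
    simp only [mem_filter, mem_univ, true_and]
    exact hΨinj a a₀
  have hcount : ∀ t : Set (Fin N → Fin ℓ → Bool),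
      (univ.filter fun a : A => Ψ a ∈ t).card = (H.filter (· ∈ t)).card * c0 := by
    intro t
    rw [Finset.card_eq_sum_card_fiberwise (f := Ψ) (t := H.filter (· ∈ t))
      (fun a ha => mem_filter.mpr ⟨mem_image_of_mem _ (mem_univ a), (mem_filter.mp ha).2⟩)]
    rw [Finset.sum_congr rfl (fun b hb => ?_), Finset.sum_const, smul_eq_mul]
    obtain ⟨hbH, hbt⟩ := mem_filter.mp hb
    obtain ⟨a₀, -, rfl⟩ := mem_image.mp hbH
    rw [← hfiber a₀]
    congr 1
    ext a
    simp only [mem_filter, mem_univ, true_and, and_iff_right_iff_imp]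
    intro h
    rw [h]; exact hbt
  have hHtot : H.card * c0 = Fintype.card A := by
    have h := hcount Set.univ
    simp only [Set.mem_univ, Finset.filter_true, Finset.card_univ] at h
    exact h.symm
  have hmeas : ∀ t : Set (Fin N → Fin ℓ → Bool), MeasurableSet t := fun t =>
    t.to_countable.measurableSet
  have hμ : ∀ t : Set (Fin N → Fin ℓ → Bool),
      (PMF.uniformOfFinset H hne).toMeasure t
        = ((univ.filter fun a : A => Ψ a ∈ t).card : ℝ≥0∞) / (Fintype.card A : ℝ≥0∞) := by
    intro t
    rw [PMF.toMeasure_uniformOfFinset_apply hne t (hmeas t)]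
    refine kwise_nat_div_eq (Finset.card_pos.mpr hne) hAcard_pos ?_
    rw [hcount t, ← hHtot]; ring
  have hmain : ∀ (ι : Type) (_ : Fintype ι) (_ : DecidableEq ι) (v : ι → Fin N),
      Function.Injective v → Fintype.card ι ≤ k → ∀ B : ι → Set (Fin ℓ → Bool),
      (univ.filter fun a : A => ∀ j, Ψ a (v j) ∈ B j).card * (2 ^ ℓ) ^ (Fintype.card ι)
        = (∏ j, (univ.filter fun g : Fin ℓ → ZMod 2 => E₂ g ∈ B j).card)
            * Fintype.card A := by
    intro ι _ _ v hv hle B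
    have hsurj := kwTheta_surj k ℓ (Nat.clog 2 N) hk hℓ (fun j => ιF (v j))
        (ιF.injective.comp hv) hle
    have h := kwise_count_mem (kwTheta k ℓ (Nat.clog 2 N) hℓ (fun j => ιF (v j))) hsurj
        (Fintype.piFinset fun j => univ.filter fun g => E₂ g ∈ B j)
    rw [Fintype.card_piFinset] at h
    rw [show Fintype.card (ι → Fin ℓ → ZMod 2) = (2 ^ ℓ) ^ Fintype.card ι by
        rw [Fintype.card_fun, hcardGl]] at h
    have hset : (univ.filter fun a : A =>
        (kwTheta k ℓ (Nat.clog 2 N) hℓ (fun j => ιF (v j))) a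
          ∈ Fintype.piFinset fun j => univ.filter fun g => E₂ g ∈ B j)
        = (univ.filter fun a : A => ∀ j, Ψ a (v j) ∈ B j) := by
      ext a
      simp only [mem_filter, mem_univ, true_and, Fintype.mem_piFinset]
      exact Iff.rfl
    rw [hset] at h
    exact h
  have hsingle : ∀ (x : Fin N) (B : Set (Fin ℓ → Bool)),
      (PMF.uniformOfFinset H hne).toMeasure {h : Fin N → Fin ℓ → Bool | h x ∈ B}
        = ((univ.filter fun g : Fin ℓ → ZMod 2 => E₂ g ∈ B).card : ℝ≥0∞)
            / ((2 : ℝ≥0∞) ^ ℓ) := by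
    intro x B
    rw [hμ]
    have h := hmain (Fin 1) inferInstance inferInstance (fun _ => x)
        (Function.injective_of_subsingleton _) (by simpa using Nat.succ_le_of_lt hk) (fun _ => B)
    simp only [Fintype.card_fin, pow_one, Finset.prod_const, Finset.card_univ] at h
    have h' : (univ.filter fun a : A =>
          Ψ a ∈ {h : Fin N → Fin ℓ → Bool | h x ∈ B}).card * 2 ^ ℓ
        = (univ.filter fun g : Fin ℓ → ZMod 2 => E₂ g ∈ B).card * Fintype.card A := by
      rw [← h]
      congr 1
      refine congrArg Finset.card ?_
      ext a
      simp
    have h2 := kwise_nat_div_eq hAcard_pos (pow_pos (by norm_num) ℓ) h'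
    rw [h2]
    push_cast
    ring
  refine ⟨H, hne, ?_, ?_, ?_⟩
  · exact Finset.card_image_le.trans (by rw [Finset.card_univ, hcardA])
  · intro S hS
    rw [iIndepFun_iff_measure_inter_preimage_eq_mul]
    intro S' sets _
    have hv : Function.Injective (fun j : {j // j ∈ S'} => (j.1.1 : Fin N)) := fun a b h =>
      Subtype.ext (Subtype.ext h)
    have hle : Fintype.card {j // j ∈ S'} ≤ k := by
      rw [Fintype.card_coe]
      exact le_trans (le_trans (Finset.card_le_univ S') (le_of_eq (Fintype.card_coe S))) hS
    have h := hmain {j // j ∈ S'} inferInstance inferInstance (fun j => j.1.1) hv hle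
        (fun j => sets j.1)
    have h' : (univ.filter fun a : A =>
          Ψ a ∈ (⋂ i ∈ S', (fun h : Fin N → Fin ℓ → Bool => h i.1) ⁻¹' sets i)).card
            * (2 ^ ℓ) ^ Fintype.card {j // j ∈ S'}
        = (∏ j : {j // j ∈ S'},
            (univ.filter fun g : Fin ℓ → ZMod 2 => E₂ g ∈ sets j.1).card)
              * Fintype.card A := by
      rw [← h]
      congr 1
      refine congrArg Finset.card ?_
      ext a
      simp only [mem_filter, mem_univ, true_and, Set.mem_iInter, Set.mem_preimage]
      constructor
      · intro hall j; exact hall j.1 j.2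
      · intro hall i hi; exact hall ⟨i, hi⟩
    have h2 := kwise_nat_div_eq hAcard_pos
        (pow_pos (pow_pos (by norm_num) ℓ) _) h'
    rw [hμ, h2, Fintype.card_coe]
    refine Eq.trans ?_ (Finset.prod_congr rfl (fun i _ => (hsingle i.1 (sets i)).symm))
    rw [Nat.cast_prod, Nat.cast_pow, Nat.cast_pow, Nat.cast_ofNat]
    rw [Finset.prod_coe_sort S'
      (fun i => ((univ.filter fun g : Fin ℓ → ZMod 2 => E₂ g ∈ sets i).card : ℝ≥0∞))]
    rw [div_eq_mul_inv]
    simp only [div_eq_mul_inv, Finset.prod_mul_distrib, Finset.prod_const, ENNReal.inv_pow]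
  · intro x y
    have hsets : {h : Fin N → Fin ℓ → Bool | h x = y}
        = {h : Fin N → Fin ℓ → Bool | h x ∈ ({y} : Set (Fin ℓ → Bool))} := by
      ext h; simp
    rw [hsets, hsingle x {y}]
    have hone : ∀ B : Set (Fin ℓ → Bool), B = {y} →
        (univ.filter fun g : Fin ℓ → ZMod 2 => E₂ g ∈ B).card = 1 := by
      rintro B rfl
      rw [Finset.card_eq_one]
      exact ⟨E₂.symm y, by ext g; simp [Equiv.apply_eq_iff_eq_symm_apply]⟩
    rw [hone {y} rfl]
    simp
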